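/- Let κ be a regular infinite cardinal, identified with the set of ordinals below κ, and let K = {A ⊆ κ : |A| < κ}. Then κ_K^♭ asymorphically embeds into κ_{K-ary}^♭: there exists an injective map from K \ {∅} into K \ {∅} that is a coarse embedding from κ_K^♭ into κ_{K-ary}^♭. -/

import Mathlib

open Set Cardinal

universe u v

variable {X : Type*} {Y : Type*} {P : Type*} {Q : Type*}

/-- The ball around a set: `B(A, r) = ⋃_{y ∈ A} B(y, r)`. -/
def ballSet (B : X → P → Set X) (A : Set X) (r : P) : Set X := ⋃ y ∈ A, B y r

/-- `B : X → P → Set X` is the ball structure of a ballean with support `X` and radii `P`. -/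
def IsBalleanBall (B : X → P → Set X) : Prop :=
  Nonempty P ∧ (∀ x r, x ∈ B x r) ∧ (∀ x y r, x ∈ B y r ↔ y ∈ B x r) ∧
    (∀ r s, ∃ t, ∀ x, ballSet B (B x r) s ⊆ B x t)

/-- A map between balleans is coarse. -/
def IsCoarse (BX : X → P → Set X) (BY : Y → Q → Set Y) (f : X → Y) : Prop :=
  ∀ r, ∃ s, ∀ x, f '' BX x r ⊆ BY (f x) s

/-- A map between balleans is effectively proper. -/
def IsEffectivelyProper (BX : X → P → Set X) (BY : Y → Q → Set Y) (f : X → Y) : Prop :=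
  ∀ s, ∃ r, ∀ x, f ⁻¹' BY (f x) s ⊆ BX x r

/-- A coarse embedding is a map that is both coarse and effectively proper. -/
def IsCoarseEmbedding (BX : X → P → Set X) (BY : Y → Q → Set Y) (f : X → Y) : Prop :=
  IsCoarse BX BY f ∧ IsEffectivelyProper BX BY f

/-- An asymorphism is a bijective map that is both coarse and effectively proper. -/
def IsAsymorphism (BX : X → P → Set X) (BY : Y → Q → Set Y) (f : X → Y) : Prop :=
  Function.Bijective f ∧ IsCoarse BX BY f ∧ IsEffectivelyProper BX BY f

/-- A subset of a ballean is bounded. -/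
def IsBoundedSet (B : X → P → Set X) (A : Set X) : Prop :=
  A = ∅ ∨ ∃ r, ∀ y ∈ A, A ⊆ B y r

/-- A subset of a ballean is large. -/
def IsLargeSet (B : X → P → Set X) (A : Set X) : Prop :=
  ∃ r, ballSet B A r = Set.univ

/-- A subset of a ballean is thick. -/
def IsThickSet (B : X → P → Set X) (A : Set X) : Prop :=
  ∀ r, ∃ x ∈ A, B x r ⊆ A

/-- A subset of a ballean is thin. -/
def IsThinSet (B : X → P → Set X) (A : Set X) : Prop :=
  ∀ r, ∃ V : Set X, IsBoundedSet B V ∧ ∀ x ∈ A \ V, B x r ∩ A = {x}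

/-- A `{0,1}`-valued function on a ballean is slowly oscillating. -/
def IsSlowlyOscillating (B : X → P → Set X) (f : X → Bool) : Prop :=
  ∀ r, ∃ V : Set X, IsBoundedSet B V ∧ ∀ x, x ∉ V → ∀ y ∈ B x r, ∀ z ∈ B x r, f y = f z

/-- A ballean is connected. -/
def IsConnectedBall (B : X → P → Set X) : Prop := ∀ x y, ∃ r, y ∈ B x r

/-- The connected component of a point of a ballean. -/
def balleanComponent (B : X → P → Set X) (x : X) : Set X := {y | ∃ r, y ∈ B x r}

/-- The ball structure of the hyperballean `exp B`. -/
def expBall (B : X → P → Set X) : Set X → P → Set (Set X) :=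
  fun A r => {C | A ⊆ ballSet B C r ∧ C ⊆ ballSet B A r}

/-- The ball structure of the subballean on a subset `S`. -/
def subBall (B : X → P → Set X) (S : Set X) : S → P → Set S :=
  fun y r => {z | (z : X) ∈ B (y : X) r}

/-- An ideal on a set `X`: a family of subsets closed under subsets and finite unions,
containing all finite sets, and not containing `X` itself. -/
def IsIdeal (I : Set (Set X)) : Prop :=
  (∀ A ∈ I, ∀ B ⊆ A, B ∈ I) ∧ (∀ A ∈ I, ∀ B ∈ I, A ∪ B ∈ I) ∧
    (∀ A : Set X, A.Finite → A ∈ I) ∧ Set.univ ∉ I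

/-- The ball structure of the point ideal ballean `X_I`:
`B_I(x,A) = {x}` if `x ∉ A` and `B_I(x,A) = {x} ∪ A` if `x ∈ A`. -/
def pointIdealBall (I : Set (Set X)) : X → I → Set X :=
  fun x A => insert x {y | y ∈ (A : Set X) ∧ x ∈ (A : Set X)}

/-- The ball structure of the `I`-ary ballean `X_{I-ary}`: `B(x,A) = {x} ∪ A`. -/
def aryBall (I : Set (Set X)) : X → I → Set X :=
  fun x A => insert x (A : Set X)

/-- The ball structure of the ballean `C(X,I)` on `𝒫(X)`: `B_C(Z,K) = {W | Z △ W ⊆ K}`. -/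
def cBall (I : Set (Set X)) : Set X → I → Set (Set X) :=
  fun Z K => {W | symmDiff Z W ⊆ (K : Set X)}

/-- The support of the flat hyperballean `X^♭`: all nonempty bounded subsets. -/
def flatSupport (B : X → P → Set X) : Set (Set X) := {A | A.Nonempty ∧ IsBoundedSet B A}
section BalleanAux

variable {X : Type*} {I : Set (Set X)}

lemma mem_ballSet {B : X → I → Set X} {A : Set X} {r : I} {x : X} :
    x ∈ ballSet B A r ↔ ∃ y ∈ A, x ∈ B y r := by
  simp [ballSet]

lemma ballSet_ary_subset (C : Set X) (r : I) : ballSet (aryBall I) C r ⊆ C ∪ ↑r := by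
  intro x hx
  obtain ⟨y, hy, hx⟩ := mem_ballSet.mp hx
  rcases Set.mem_insert_iff.mp hx with rfl | hx
  · exact Or.inl hy
  · exact Or.inr hx

lemma subset_ballSet_ary {C : Set X} (hC : C.Nonempty) (r : I) :
    C ∪ ↑r ⊆ ballSet (aryBall I) C r := by
  obtain ⟨y0, hy0⟩ := hC
  intro x hx
  rcases hx with hx | hx
  · exact mem_ballSet.mpr ⟨x, hx, Set.mem_insert _ _⟩
  · exact mem_ballSet.mpr ⟨y0, hy0, Set.mem_insert_iff.mpr (Or.inr hx)⟩

lemma ballSet_pt_subset (A : Set X) (r : I) : ballSet (pointIdealBall I) A r ⊆ A ∪ ↑r := by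
  intro x hx
  obtain ⟨y, hy, hx⟩ := mem_ballSet.mp hx
  rcases Set.mem_insert_iff.mp hx with rfl | hx
  · exact Or.inl hy
  · exact Or.inr hx.1

lemma subset_ballSet_pt (A : Set X) (r : I) : A ⊆ ballSet (pointIdealBall I) A r :=
  fun x hx => mem_ballSet.mpr ⟨x, hx, Set.mem_insert _ _⟩

lemma ballSet_pt_of_disjoint {A : Set X} {r : I} (h : A ∩ ↑r = ∅) :
    ballSet (pointIdealBall I) A r = A := by
  refine subset_antisymm ?_ (subset_ballSet_pt A r)
  intro x hx
  obtain ⟨y, hy, hx⟩ := mem_ballSet.mp hx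
  rcases Set.mem_insert_iff.mp hx with rfl | hx
  · exact hy
  · exact absurd (Set.mem_inter hy hx.2) (by rw [h]; exact Set.notMem_empty y)

lemma subset_ballSet_pt' {A : Set X} {r : I} (h : (A ∩ ↑r).Nonempty) :
    A ∪ ↑r ⊆ ballSet (pointIdealBall I) A r := by
  obtain ⟨y0, hy0A, hy0r⟩ := h
  intro x hx
  rcases hx with hx | hx
  · exact subset_ballSet_pt A r hx
  · exact mem_ballSet.mpr ⟨y0, hy0A, Set.mem_insert_iff.mpr (Or.inr ⟨hx, hy0r⟩)⟩

lemma expBall_pt_forward {A C : Set X} {r : I} (h : C ∈ expBall (pointIdealBall I) A r) :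
    C = A ∨ ((A ∩ ↑r).Nonempty ∧ (C ∩ ↑r).Nonempty ∧ A \ C ⊆ ↑r ∧ C \ A ⊆ ↑r) := by
  obtain ⟨h1, h2⟩ := h
  rcases Set.eq_empty_or_nonempty (A ∩ ↑r) with hA | hA
  · have hCA : C ⊆ A := by rw [ballSet_pt_of_disjoint hA] at h2; exact h2
    have hC : C ∩ ↑r = ∅ :=
      Set.eq_empty_of_subset_empty (hA ▸ Set.inter_subset_inter_left _ hCA)
    left
    rw [ballSet_pt_of_disjoint hC] at h1
    exact subset_antisymm hCA h1
  rcases Set.eq_empty_or_nonempty (C ∩ ↑r) with hC | hC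
  · have hAC : A ⊆ C := by rw [ballSet_pt_of_disjoint hC] at h1; exact h1
    left
    refine subset_antisymm ?_ hAC
    intro x hx
    rcases ballSet_pt_subset A r (h2 hx) with h' | h'
    · exact h'
    · exact absurd (Set.mem_inter hx h') (by rw [hC]; exact Set.notMem_empty x)
  right
  refine ⟨hA, hC, ?_, ?_⟩
  · intro x hx
    rcases ballSet_pt_subset C r (h1 hx.1) with h' | h'
    · exact absurd h' hx.2
    · exact h'
  · intro x hx
    rcases ballSet_pt_subset A r (h2 hx.1) with h' | h'
    · exact absurd h' hx.2
    · exact h'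

lemma expBall_pt_refl (A : Set X) (r : I) : A ∈ expBall (pointIdealBall I) A r :=
  ⟨subset_ballSet_pt A r, subset_ballSet_pt A r⟩

lemma expBall_pt_backward {A C : Set X} {r : I} (hA : (A ∩ ↑r).Nonempty)
    (hC : (C ∩ ↑r).Nonempty) (h1 : A ⊆ C ∪ ↑r) (h2 : C ⊆ A ∪ ↑r) :
    C ∈ expBall (pointIdealBall I) A r :=
  ⟨h1.trans (subset_ballSet_pt' hC), h2.trans (subset_ballSet_pt' hA)⟩

lemma expBall_ary_mem {A C : Set X} {s : I} (hA : A.Nonempty) (hC : C.Nonempty)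
    (h1 : A ⊆ C ∪ ↑s) (h2 : C ⊆ A ∪ ↑s) : C ∈ expBall (aryBall I) A s :=
  ⟨h1.trans (subset_ballSet_ary hC s), h2.trans (subset_ballSet_ary hA s)⟩

lemma expBall_ary_refl (A : Set X) (s : I) : A ∈ expBall (aryBall I) A s :=
  ⟨fun x hx => mem_ballSet.mpr ⟨x, hx, Set.mem_insert _ _⟩,
   fun x hx => mem_ballSet.mpr ⟨x, hx, Set.mem_insert _ _⟩⟩

lemma expBall_ary_forward {A C : Set X} {s : I} (h : C ∈ expBall (aryBall I) A s) :
    A ⊆ C ∪ ↑s ∧ C ⊆ A ∪ ↑s :=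
  ⟨h.1.trans (ballSet_ary_subset C s), h.2.trans (ballSet_ary_subset A s)⟩

end BalleanAux

theorem aux_embed {X : Type*} [LinearOrder X] [WellFoundedLT X] (K : Set (Set X))
    (hunion : ∀ A ∈ K, ∀ B ∈ K, A ∪ B ∈ K)
    (hsingle : ∀ x : X, {x} ∈ K)
    (hIic : ∀ A ∈ K, (⋃ x ∈ A, Set.Iic x) ∈ K)
    (e t : X → X) (he : Function.Injective e) (ht : Function.Injective t)
    (hdisj : ∀ a b, e a ≠ t b)
    (hImg : ∀ A ∈ K, e '' A ∈ K) (hImgT : ∀ A ∈ K, t '' A ∈ K)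
    (hPree : ∀ A ∈ K, e ⁻¹' A ∈ K) (hPret : ∀ A ∈ K, t ⁻¹' A ∈ K) :
    ∃ f : (K \ {∅} : Set (Set X)) → (K \ {∅} : Set (Set X)),
      Function.Injective f ∧
      IsCoarseEmbedding (subBall (expBall (pointIdealBall K)) (K \ {∅}))
        (subBall (expBall (aryBall K)) (K \ {∅})) f := by
  have wf : WellFounded ((· < ·) : X → X → Prop) := wellFounded_lt
  have hne : ∀ A : (K \ {∅} : Set (Set X)), (A : Set X).Nonempty := fun A =>
    Set.nonempty_iff_ne_empty.mpr (fun h => A.2.2 h)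
  let μ : (K \ {∅} : Set (Set X)) → X := fun A => wf.min A (hne A)
  have hμ_mem : ∀ A : (K \ {∅} : Set (Set X)), μ A ∈ (A : Set X) := fun A => wf.min_mem _ _
  have hμ_le : ∀ A : (K \ {∅} : Set (Set X)), ∀ x ∈ (A : Set X), μ A ≤ x := fun A x hx =>
    not_lt.mp (wf.not_lt_min _ hx)
  let F : (K \ {∅} : Set (Set X)) → Set X := fun A => e '' ↑A ∪ {t (μ A)}
  have htF : ∀ A, t (μ A) ∈ F A := fun A => Or.inr rfl
  have heF : ∀ A : (K \ {∅} : Set (Set X)), ∀ a ∈ (A : Set X), e a ∈ F A := fun A a ha => Or.inl ⟨a, ha, rfl⟩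
  have hFne : ∀ A, (F A).Nonempty := fun A => ⟨t (μ A), htF A⟩
  have hFcases : ∀ (A : (K \ {∅} : Set (Set X))) (x : X), x ∈ F A → (∃ a ∈ (A : Set X), x = e a) ∨ x = t (μ A) := by
    intro A x hx
    rcases hx with ⟨a, ha, rfl⟩ | hx
    · exact Or.inl ⟨a, ha, rfl⟩
    · exact Or.inr hx
  have hFK : ∀ A, F A ∈ K \ {∅} := by
    intro A
    refine ⟨hunion _ (hImg _ A.2.1) _ (hsingle _), ?_⟩
    intro h
    exact absurd (h ▸ htF A) (Set.notMem_empty _)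
  refine ⟨fun A => ⟨F A, hFK A⟩, ?_, ?_, ?_⟩
  · -- injectivity
    intro A C h
    have hFeq : F A = F C := congrArg Subtype.val h
    have : (A : Set X) = (C : Set X) := by
      ext x
      constructor
      · intro hx
        rcases hFcases C (e x) (hFeq ▸ heF A x hx) with ⟨c, hc, hec⟩ | hec
        · rw [he hec]; exact hc
        · exact absurd hec (hdisj _ _)
      · intro hx
        rcases hFcases A (e x) (hFeq ▸ heF C x hx) with ⟨a, ha, hea⟩ | hea
        · rw [he hea]; exact ha
        · exact absurd hea (hdisj _ _)
    exact Subtype.ext this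
  · -- coarse
    intro r
    have hR : (⋃ x ∈ (r : Set X), Set.Iic x) ∈ K := hIic _ r.2
    have hs : (e '' ↑r ∪ t '' (⋃ x ∈ (r : Set X), Set.Iic x)) ∈ K :=
      hunion _ (hImg _ r.2) _ (hImgT _ hR)
    have key : ∀ A C : (K \ {∅} : Set (Set X)), ((A : Set X) ∩ ↑r).Nonempty →
        (A : Set X) \ ↑C ⊆ ↑r →
        F A ⊆ F C ∪ (e '' ↑r ∪ t '' (⋃ x ∈ (r : Set X), Set.Iic x)) := by
      intro A C hAr hAC x hx
      rcases hFcases A x hx with ⟨a, ha, rfl⟩ | rfl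
      · by_cases haC : a ∈ (C : Set X)
        · exact Or.inl (heF C a haC)
        · exact Or.inr (Or.inl ⟨a, hAC ⟨ha, haC⟩, rfl⟩)
      · obtain ⟨y, hyA, hyr⟩ := hAr
        exact Or.inr (Or.inr ⟨μ A, Set.mem_biUnion hyr (hμ_le A y hyA), rfl⟩)
    refine ⟨⟨_, hs⟩, ?_⟩
    rintro A _ ⟨C, hC, rfl⟩
    show F C ∈ expBall (aryBall K) (F A) ⟨_, hs⟩
    rcases expBall_pt_forward hC with heq | ⟨hAr, hCr, hACr, hCAr⟩
    · have : C = A := Subtype.ext heq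
      rw [this]
      exact expBall_ary_refl _ _
    · exact expBall_ary_mem (hFne A) (hFne C) (key A C hAr hACr) (key C A hCr hCAr)
  · -- effectively proper
    intro s
    have hse : e ⁻¹' (s : Set X) ∈ K := hPree _ s.2
    have hr : ((e ⁻¹' (s : Set X) ∪ ⋃ x ∈ e ⁻¹' (s : Set X), Set.Iic x) ∪
        t ⁻¹' (s : Set X)) ∈ K :=
      hunion _ (hunion _ hse _ (hIic _ hse)) _ (hPret _ s.2)
    refine ⟨⟨_, hr⟩, ?_⟩
    intro A C hC
    have hC' : F C ∈ expBall (aryBall K) (F A) s := hC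
    obtain ⟨h1, h2⟩ := expBall_ary_forward hC'
    show (C : Set X) ∈ expBall (pointIdealBall K) (A : Set X) ⟨_, hr⟩
    have hdiff : ∀ A C : (K \ {∅} : Set (Set X)), F A ⊆ F C ∪ ↑s →
        (A : Set X) \ ↑C ⊆ e ⁻¹' (s : Set X) := by
      intro A C h x hx
      rcases h (heF A x hx.1) with hex | hex
      · rcases hFcases C _ hex with ⟨c, hc, hec⟩ | hec
        · exact absurd (by rw [he hec]; exact hc) hx.2
        · exact absurd hec (hdisj _ _)
      · exact hex
    have hAC : (A : Set X) \ ↑C ⊆ e ⁻¹' (s : Set X) := hdiff A C h1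
    have hCA : (C : Set X) \ ↑A ⊆ e ⁻¹' (s : Set X) := hdiff C A h2
    have hsub1 : (A : Set X) ⊆ ↑C ∪ ((e ⁻¹' (s : Set X) ∪ ⋃ x ∈ e ⁻¹' (s : Set X), Set.Iic x) ∪
        t ⁻¹' (s : Set X)) := by
      intro y hy
      by_cases hyC : y ∈ (C : Set X)
      · exact Or.inl hyC
      · exact Or.inr (Or.inl (Or.inl (hAC ⟨hy, hyC⟩)))
    have hsub2 : (C : Set X) ⊆ ↑A ∪ ((e ⁻¹' (s : Set X) ∪ ⋃ x ∈ e ⁻¹' (s : Set X), Set.Iic x) ∪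
        t ⁻¹' (s : Set X)) := by
      intro y hy
      by_cases hyA : y ∈ (A : Set X)
      · exact Or.inl hyA
      · exact Or.inr (Or.inl (Or.inl (hCA ⟨hy, hyA⟩)))
    by_cases heq : (C : Set X) = (A : Set X)
    · rw [heq]; exact expBall_pt_refl _ _
    · have hx : ∃ x, x ∈ ((A : Set X) \ ↑C) ∪ ((C : Set X) \ ↑A) := by
        by_contra h
        push_neg at h
        apply heq
        ext x
        constructor
        · intro hxC
          by_contra hxA
          exact h x (Or.inr ⟨hxC, hxA⟩)
        · intro hxA
          by_contra hxC
          exact h x (Or.inl ⟨hxA, hxC⟩)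
      obtain ⟨x, hx⟩ := hx
      by_cases hm : μ A = μ C
      · have hxse : x ∈ e ⁻¹' (s : Set X) := by
          rcases hx with h' | h'
          · exact hAC h'
          · exact hCA h'
        have hμle : μ A ≤ x := by
          rcases hx with h' | h'
          · exact hμ_le A x h'.1
          · rw [hm]; exact hμ_le C x h'.1
        have hμr : μ A ∈ (e ⁻¹' (s : Set X) ∪ ⋃ x ∈ e ⁻¹' (s : Set X), Set.Iic x) ∪
            t ⁻¹' (s : Set X) := Or.inl (Or.inr (Set.mem_biUnion hxse hμle))
        exact expBall_pt_backward ⟨μ A, hμ_mem A, hμr⟩ ⟨μ C, hμ_mem C, hm ▸ hμr⟩ hsub1 hsub2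
      · have hμA : μ A ∈ t ⁻¹' (s : Set X) := by
          rcases h1 (htF A) with h3 | h3
          · rcases hFcases C _ h3 with ⟨c, hc, hec⟩ | hec
            · exact absurd hec.symm (hdisj _ _)
            · exact absurd (ht hec) hm
          · exact h3
        have hμC : μ C ∈ t ⁻¹' (s : Set X) := by
          rcases h2 (htF C) with h3 | h3
          · rcases hFcases A _ h3 with ⟨a, ha, hea⟩ | hea
            · exact absurd hea.symm (hdisj _ _)
            · exact absurd (ht hea).symm hm
          · exact h3
        exact expBall_pt_backward ⟨μ A, hμ_mem A, Or.inr hμA⟩ ⟨μ C, hμ_mem C, Or.inr hμC⟩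
          hsub1 hsub2

/-- Let `κ` be a regular infinite cardinal (identified with the set `κ.ord.ToType` of
ordinals below `κ`) and `K = {A ⊆ κ : |A| < κ}`. Then `κ_K^♭` asymorphically embeds into
`κ_{K-ary}^♭`: there is an injective coarse embedding from the subballean of `exp(κ_K)` on
`K \ {∅}` into the subballean of `exp(κ_{K-ary})` on `K \ {∅}`. -/

theorem stmt14 (κ : Cardinal.{u}) (hκ : κ.IsRegular) :
    ∃ f : ({A : Set κ.ord.ToType | #A < κ} \ {∅} : Set (Set κ.ord.ToType)) →
        ({A : Set κ.ord.ToType | #A < κ} \ {∅} : Set (Set κ.ord.ToType)),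
      Function.Injective f ∧
      IsCoarseEmbedding
        (subBall (expBall (pointIdealBall {A : Set κ.ord.ToType | #A < κ}))
          ({A : Set κ.ord.ToType | #A < κ} \ {∅}))
        (subBall (expBall (aryBall {A : Set κ.ord.ToType | #A < κ}))
          ({A : Set κ.ord.ToType | #A < κ} \ {∅})) f := by
  have hℵ : ℵ₀ ≤ κ := hκ.aleph0_le
  have h1κ : (1 : Cardinal) < κ := one_lt_aleph0.trans_le hℵ
  have hmkX : #(κ.ord.ToType) = κ := by rw [Cardinal.mk_toType, Cardinal.card_ord]
  have hsum : #(κ.ord.ToType ⊕ κ.ord.ToType) = #(κ.ord.ToType) := by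
    simp only [Cardinal.mk_sum, Cardinal.lift_id]
    rw [hmkX, Cardinal.add_eq_self hℵ]
  obtain ⟨j⟩ := Cardinal.eq.mp hsum
  have hIic : ∀ x : κ.ord.ToType, #(Set.Iic x) < κ := by
    intro x
    rw [← Set.Iio_insert]
    exact Cardinal.mk_insert_le.trans_lt
      (Cardinal.add_lt_of_lt hℵ (Cardinal.mk_Iio_ord_toType x) h1κ)
  apply aux_embed
  · intro A hA B hB
    exact (Cardinal.mk_union_le A B).trans_lt (Cardinal.add_lt_of_lt hℵ hA hB)
  · intro x
    simpa using h1κ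
  · intro A hA
    rw [Set.biUnion_eq_iUnion]
    exact Cardinal.mk_iUnion_le_sum_mk.trans_lt (Cardinal.sum_lt_of_isRegular hκ hA
      (fun i => hIic _))
  · exact j.injective.comp Sum.inl_injective
  · exact j.injective.comp Sum.inr_injective
  · intro a b h
    exact Sum.inl_ne_inr (j.injective h)
  · intro A hA
    exact Cardinal.mk_image_le.trans_lt hA
  · intro A hA
    exact Cardinal.mk_image_le.trans_lt hA
  · intro A hA
    exact (Cardinal.mk_preimage_of_injective _ _ (j.injective.comp Sum.inl_injective)).trans_lt hA
  · intro A hA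
    exact (Cardinal.mk_preimage_of_injective _ _ (j.injective.comp Sum.inr_injective)).trans_lt hA
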